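/- For any real symmetric d × d matrices X and Y and any λ > 0, letting A(M) = √(MᵀM + (4/λ)I), one has ‖A(X) − A(Y)‖_F ≤ α_λ ‖X − Y‖_F, where α_λ = 1 − (1/2)·((λ/4)·Λ_max(X)² + 1)^{-1/2}·((λ/4)·Λ_max(Y)² + 1)^{-1/2} and Λ_max(M) denotes the largest absolute value of an eigenvalue of M. In particular 0 < α_λ < 1. -/

import Mathlib

open scoped Matrix

/-- Frobenius norm of a matrix. -/
noncomputable def frobNorm {d : ℕ} (A : Matrix (Fin d) (Fin d) ℝ) : ℝ :=
  Real.sqrt (∑ i, ∑ j, (A i j) ^ 2)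

/-- Largest eigenvalue in absolute value of a Hermitian matrix. -/
noncomputable def lamMax {d : ℕ} {X : Matrix (Fin d) (Fin d) ℝ} (hX : X.IsHermitian) : ℝ :=
  ⨆ i, |hX.eigenvalues i|

/-- The removed Mathlib definition `Matrix.PosSemidef.sqrt` (Mathlib, Dec 2024), restated verbatim. -/
noncomputable def Matrix.PosSemidef.sqrt {n : Type*} {𝕜 : Type*} [Fintype n] [RCLike 𝕜]
    [PartialOrder 𝕜] [StarOrderedRing 𝕜] [DecidableEq n] {A : Matrix n n 𝕜} (hA : A.PosSemidef) : Matrix n n 𝕜 :=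
  (hA.1.eigenvectorUnitary : Matrix n n 𝕜) *
    Matrix.diagonal (fun i => ((Real.sqrt (hA.1.eigenvalues i) : ℝ) : 𝕜)) *
    (star hA.1.eigenvectorUnitary : Matrix n n 𝕜)

lemma abs_le_sub (c a : ℝ) (hc : 0 < c) :
    |a| ≤ Real.sqrt (a ^ 2 + c) - c / (2 * Real.sqrt (a ^ 2 + c)) := by
  have h0 : (0:ℝ) < a ^ 2 + c := by positivity
  set u := Real.sqrt (a ^ 2 + c) with hu
  have hupos : 0 < u := Real.sqrt_pos.mpr h0
  have hu2 : u ^ 2 = a ^ 2 + c := Real.sq_sqrt h0.le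
  rw [le_sub_iff_add_le]
  rw [show |a| + c / (2 * u) ≤ u ↔ c / (2*u) ≤ u - |a| from by constructor <;> intro <;> linarith,
    div_le_iff₀ (by positivity)]
  nlinarith [sq_nonneg (u - |a|), sq_abs a, abs_nonneg a]

lemma scalar_lip (c a b P Q : ℝ) (hc : 0 < c)
    (hP : Real.sqrt (a ^ 2 + c) ≤ P) (hQ : Real.sqrt (b ^ 2 + c) ≤ Q) :
    |Real.sqrt (a ^ 2 + c) - Real.sqrt (b ^ 2 + c)| ≤
      (1 - (c / 2) / (P * Q)) * |a - b| := by
  have h0a : (0:ℝ) < a ^ 2 + c := by positivity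
  have h0b : (0:ℝ) < b ^ 2 + c := by positivity
  set u := Real.sqrt (a ^ 2 + c) with hu
  set v := Real.sqrt (b ^ 2 + c) with hv
  have hup : 0 < u := Real.sqrt_pos.mpr h0a
  have hvp : 0 < v := Real.sqrt_pos.mpr h0b
  have hu2 : u ^ 2 = a ^ 2 + c := Real.sq_sqrt h0a.le
  have hv2 : v ^ 2 = b ^ 2 + c := Real.sq_sqrt h0b.le
  have hPp : 0 < P := lt_of_lt_of_le hup hP
  have hQp : 0 < Q := lt_of_lt_of_le hvp hQ
  have key : (u - v) * (u + v) = (a + b) * (a - b) := by nlinarith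
  have habs : |u - v| * (u + v) = |a + b| * |a - b| := by
    have := congrArg abs key
    rwa [abs_mul, abs_mul, abs_of_pos (by linarith : (0:ℝ) < u + v)] at this
  -- bound |a| and |b|
  have ha' : |a| ≤ u - c / (2 * u) := abs_le_sub c a hc
  have hb' : |b| ≤ v - c / (2 * v) := abs_le_sub c b hc
  have hsum : |a + b| ≤ (u + v) - (c / 2) * (u + v) / (u * v) := by
    have := abs_add_le a b
    have e : u - c / (2 * u) + (v - c / (2 * v)) = (u + v) - (c / 2) * (u + v) / (u * v) := by
      field_simp; ring
    linarith [e ▸ add_le_add ha' hb']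
  have huvPQ : u * v ≤ P * Q := mul_le_mul hP hQ hvp.le hPp.le
  have hsum2 : |a + b| ≤ (1 - (c / 2) / (P * Q)) * (u + v) := by
    have h1 : (c / 2) / (P * Q) * (u + v) ≤ (c / 2) * (u + v) / (u * v) := by
      rw [div_mul_eq_mul_div, div_mul_eq_mul_div]
      gcongr
    nlinarith
  -- conclude
  have h2 : |u - v| * (u + v) ≤ (1 - (c / 2) / (P * Q)) * |a - b| * (u + v) := by
    rw [habs, mul_comm (|a + b|) (|a - b|)]
    calc |a - b| * |a + b| ≤ |a - b| * ((1 - (c / 2) / (P * Q)) * (u + v)) :=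
          mul_le_mul_of_nonneg_left hsum2 (abs_nonneg _)
      _ = (1 - (c / 2) / (P * Q)) * |a - b| * (u + v) := by ring
  exact le_of_mul_le_mul_right h2 (by linarith)


set_option maxHeartbeats 1000000

variable {d : ℕ}

lemma sumsq_eq_trace (M : Matrix (Fin d) (Fin d) ℝ) :
    ∑ i, ∑ j, M i j ^ 2 = (Mᴴ * M).trace := by
  simp only [Matrix.trace, Matrix.diag, Matrix.mul_apply, Matrix.conjTranspose_apply,
    star_trivial, sq]
  exact Finset.sum_comm

lemma conj_mul_conj {U : Matrix (Fin d) (Fin d) ℝ} (hU : star U * U = 1)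
    (A B : Matrix (Fin d) (Fin d) ℝ) :
    (U * A * star U) * (U * B * star U) = U * (A * B) * star U := by
  have h : star U * (U * (B * star U)) = B * star U := by
    rw [← Matrix.mul_assoc, hU, Matrix.one_mul]
  simp only [Matrix.mul_assoc, h]

lemma sumsq_unitary_conj {U V M : Matrix (Fin d) (Fin d) ℝ}
    (hU : U ∈ Matrix.unitaryGroup (Fin d) ℝ) (hV : V ∈ Matrix.unitaryGroup (Fin d) ℝ) :
    ∑ i, ∑ j, (star U * M * V) i j ^ 2 = ∑ i, ∑ j, M i j ^ 2 := by
  rw [sumsq_eq_trace, sumsq_eq_trace]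
  have hU1 : U * star U = 1 := (Matrix.mem_unitaryGroup_iff).mp hU
  have hV1 : V * star V = 1 := (Matrix.mem_unitaryGroup_iff).mp hV
  have e1 : (star U * M * V)ᴴ = star V * Mᴴ * U := by
    simp [Matrix.conjTranspose_mul, Matrix.star_eq_conjTranspose, Matrix.mul_assoc]
  rw [e1]
  have e2 : star V * Mᴴ * U * (star U * M * V) = star V * (Mᴴ * M) * V := by
    have h : U * (star U * (M * V)) = M * V := by
      rw [← Matrix.mul_assoc, hU1, Matrix.one_mul]
    simp only [Matrix.mul_assoc, h]
  rw [e2, Matrix.trace_mul_cycle, hV1, Matrix.one_mul]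

open scoped MatrixOrder in
lemma psd_sqrt_eq_of_sq {A B : Matrix (Fin d) (Fin d) ℝ} (hA : A.PosSemidef) (hB : B.PosSemidef)
    (h : B ^ 2 = A) : hA.sqrt = B := by
  have e1 : hA.sqrt = cfc Real.sqrt A := by
    rw [hA.1.cfc_eq, Matrix.IsHermitian.cfc, Matrix.PosSemidef.sqrt, Unitary.conjStarAlgAut_apply]; rfl
  rw [e1, ← cfcₙ_eq_cfc, ← CFC.sqrt_eq_real_sqrt A hA.nonneg]
  exact CFC.sqrt_unique (by rw [← sq, h]) hB.nonneg

lemma sqrt_formula (X : Matrix (Fin d) (Fin d) ℝ) (hX : X.IsHermitian) (c : ℝ) (hc : 0 ≤ c)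
    (hP : (Xᵀ * X + c • (1 : Matrix (Fin d) (Fin d) ℝ)).PosSemidef) :
    hP.sqrt = (hX.eigenvectorUnitary : Matrix (Fin d) (Fin d) ℝ) *
      Matrix.diagonal (fun i => Real.sqrt ((hX.eigenvalues i) ^ 2 + c)) *
      star (hX.eigenvectorUnitary : Matrix (Fin d) (Fin d) ℝ) := by
  set U := (hX.eigenvectorUnitary : Matrix (Fin d) (Fin d) ℝ) with hUdef
  set D := Matrix.diagonal (fun i => Real.sqrt ((hX.eigenvalues i) ^ 2 + c)) with hDdef
  have hU1 : U * star U = 1 := (Matrix.mem_unitaryGroup_iff).mp hX.eigenvectorUnitary.2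
  have hU1' : star U * U = 1 := (Matrix.mem_unitaryGroup_iff').mp hX.eigenvectorUnitary.2
  have hDpsd : D.PosSemidef := Matrix.posSemidef_diagonal_iff.mpr fun i => Real.sqrt_nonneg _
  have hBpsd : (U * D * star U).PosSemidef := by
    rw [Matrix.star_eq_conjTranspose]
    exact hDpsd.mul_mul_conjTranspose_same U
  have hspec : X = U * Matrix.diagonal hX.eigenvalues * star U := by
    have := hX.spectral_theorem
    simpa [RCLike.ofReal_real_eq_id] using this
  have hXT : Xᵀ = X := by
    have h1 := hX.eq
    have h2 : Xᴴ = Xᵀ := by ext i j; simp [Matrix.conjTranspose_apply]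
    rw [← h2, h1]
  have hsq : (U * D * star U) ^ 2 = Xᵀ * X + c • (1 : Matrix (Fin d) (Fin d) ℝ) := by
    rw [hXT, sq, conj_mul_conj hU1']
    have hDD : D * D = Matrix.diagonal hX.eigenvalues * Matrix.diagonal hX.eigenvalues +
        c • (1 : Matrix (Fin d) (Fin d) ℝ) := by
      rw [hDdef, Matrix.diagonal_mul_diagonal, Matrix.diagonal_mul_diagonal,
        Matrix.smul_one_eq_diagonal, Matrix.diagonal_add]
      have hf : (fun i => Real.sqrt (hX.eigenvalues i ^ 2 + c) *
          Real.sqrt (hX.eigenvalues i ^ 2 + c)) =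
          fun i => hX.eigenvalues i * hX.eigenvalues i + c := by
        funext i
        rw [Real.mul_self_sqrt (by positivity : (0:ℝ) ≤ hX.eigenvalues i ^ 2 + c)]
        ring
      rw [hf]
    rw [hDD, Matrix.mul_add, Matrix.add_mul]
    congr 1
    · conv_rhs => rw [hspec]
      rw [conj_mul_conj hU1']
    · rw [Matrix.mul_smul, Matrix.smul_mul, Matrix.mul_one, hU1]
  exact psd_sqrt_eq_of_sq hP hBpsd hsq

lemma rpow_repr (lam L : ℝ) (hlam : 0 < lam) :
    ((lam / 4) * L ^ 2 + 1) ^ (-(1 / 2) : ℝ) =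
      Real.sqrt (4 / lam) / Real.sqrt (L ^ 2 + 4 / lam) := by
  have hc : (0:ℝ) < 4 / lam := by positivity
  have ht : (0:ℝ) < (lam / 4) * L ^ 2 + 1 := by positivity
  have htt : (lam / 4) * L ^ 2 + 1 = (L ^ 2 + 4 / lam) / (4 / lam) := by
    field_simp
  rw [Real.rpow_neg ht.le, ← Real.sqrt_eq_rpow, htt,
    Real.sqrt_div (by positivity) _, ← one_div, one_div_div]

theorem stmt_7 {d : ℕ} [NeZero d] (X Y : Matrix (Fin d) (Fin d) ℝ) (lam : ℝ) (hlam : 0 < lam)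
    (hX : X.IsHermitian) (hY : Y.IsHermitian)
    (hPX : (Xᵀ * X + (4 / lam) • (1 : Matrix (Fin d) (Fin d) ℝ)).PosSemidef)
    (hPY : (Yᵀ * Y + (4 / lam) • (1 : Matrix (Fin d) (Fin d) ℝ)).PosSemidef) :
    frobNorm (hPX.sqrt - hPY.sqrt) ≤
      (1 - (1 / 2) * ((lam / 4) * (lamMax hX) ^ 2 + 1) ^ (-(1 / 2) : ℝ) *
          ((lam / 4) * (lamMax hY) ^ 2 + 1) ^ (-(1 / 2) : ℝ)) * frobNorm (X - Y) ∧
    0 < 1 - (1 / 2) * ((lam / 4) * (lamMax hX) ^ 2 + 1) ^ (-(1 / 2) : ℝ) *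
          ((lam / 4) * (lamMax hY) ^ 2 + 1) ^ (-(1 / 2) : ℝ) ∧
    1 - (1 / 2) * ((lam / 4) * (lamMax hX) ^ 2 + 1) ^ (-(1 / 2) : ℝ) *
          ((lam / 4) * (lamMax hY) ^ 2 + 1) ^ (-(1 / 2) : ℝ) < 1 := by
  set c : ℝ := 4 / lam with hcdef
  have hc : (0:ℝ) < c := by positivity
  set a := hX.eigenvalues with hadef
  set b := hY.eigenvalues with hbdef
  set Lx := lamMax hX with hLxdef
  set Ly := lamMax hY with hLydef
  set P := Real.sqrt (Lx ^ 2 + c) with hPdef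
  set Q := Real.sqrt (Ly ^ 2 + c) with hQdef
  have hPp : 0 < P := Real.sqrt_pos.mpr (by positivity)
  have hQp : 0 < Q := Real.sqrt_pos.mpr (by positivity)
  set α : ℝ := 1 - (c / 2) / (P * Q) with hαdef
  -- the target coefficient equals α
  have hcoef : 1 - (1 / 2) * ((lam / 4) * Lx ^ 2 + 1) ^ (-(1 / 2) : ℝ) *
      ((lam / 4) * Ly ^ 2 + 1) ^ (-(1 / 2) : ℝ) = α := by
    rw [rpow_repr lam Lx hlam, rpow_repr lam Ly hlam, hαdef]
    have h1 : Real.sqrt (4 / lam) * Real.sqrt (4 / lam) = c := Real.mul_self_sqrt hc.le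
    rw [← hcdef]
    field_simp
    rw [Real.sq_sqrt hc.le]; ring
  -- α bounds
  have hPc : Real.sqrt c ≤ P := Real.sqrt_le_sqrt (by nlinarith [sq_nonneg Lx])
  have hQc : Real.sqrt c ≤ Q := Real.sqrt_le_sqrt (by nlinarith [sq_nonneg Ly])
  have hcPQ : c ≤ P * Q := by
    calc c = Real.sqrt c * Real.sqrt c := (Real.mul_self_sqrt hc.le).symm
      _ ≤ P * Q := mul_le_mul hPc hQc (Real.sqrt_nonneg _) hPp.le
  have hfrac : (c / 2) / (P * Q) ≤ 1 / 2 := by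
    rw [div_le_div_iff₀ (by positivity) (by norm_num)]
    linarith
  have hfracpos : 0 < (c / 2) / (P * Q) := by positivity
  have hα0 : (0:ℝ) < α := by rw [hαdef]; linarith
  have hα1 : α < 1 := by rw [hαdef]; linarith
  refine ⟨?_, by rw [hcoef]; exact hα0, by rw [hcoef]; exact hα1⟩
  rw [hcoef]
  -- eigenvalue bounds
  have hax : ∀ i, |a i| ≤ Lx := fun i => by
    rw [hLxdef, lamMax]
    exact le_ciSup (Set.finite_range (fun i => |hX.eigenvalues i|)).bddAbove i
  have hby : ∀ i, |b i| ≤ Ly := fun i => by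
    rw [hLydef, lamMax]
    exact le_ciSup (Set.finite_range (fun i => |hY.eigenvalues i|)).bddAbove i
  have haP : ∀ i, Real.sqrt (a i ^ 2 + c) ≤ P := fun i =>
    Real.sqrt_le_sqrt (by nlinarith [hax i, abs_nonneg (a i), sq_abs (a i)])
  have hbQ : ∀ i, Real.sqrt (b i ^ 2 + c) ≤ Q := fun i =>
    Real.sqrt_le_sqrt (by nlinarith [hby i, abs_nonneg (b i), sq_abs (b i)])
  -- matrices
  set U := (hX.eigenvectorUnitary : Matrix (Fin d) (Fin d) ℝ) with hUdef
  set V := (hY.eigenvectorUnitary : Matrix (Fin d) (Fin d) ℝ) with hVdef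
  have hU1' : star U * U = 1 := (Matrix.mem_unitaryGroup_iff').mp hX.eigenvectorUnitary.2
  have hV1' : star V * V = 1 := (Matrix.mem_unitaryGroup_iff').mp hY.eigenvectorUnitary.2
  set W := star U * V with hWdef
  have hsqX : hPX.sqrt = U * Matrix.diagonal (fun i => Real.sqrt (a i ^ 2 + c)) * star U :=
    sqrt_formula X hX c hc.le hPX
  have hsqY : hPY.sqrt = V * Matrix.diagonal (fun i => Real.sqrt (b i ^ 2 + c)) * star V :=
    sqrt_formula Y hY c hc.le hPY
  have hspecX : X = U * Matrix.diagonal a * star U := by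
    simpa [RCLike.ofReal_real_eq_id] using hX.spectral_theorem
  have hspecY : Y = V * Matrix.diagonal b * star V := by
    simpa [RCLike.ofReal_real_eq_id] using hY.spectral_theorem
  -- cancellation helpers
  have hcU : ∀ Z : Matrix (Fin d) (Fin d) ℝ, star U * (U * Z) = Z := fun Z => by
    rw [← Matrix.mul_assoc, hU1', Matrix.one_mul]
  -- conjugated entries
  have hconj : ∀ (Dx Dy : Fin d → ℝ),
      star U * (U * Matrix.diagonal Dx * star U - V * Matrix.diagonal Dy * star V) * V =
        Matrix.diagonal Dx * W - W * Matrix.diagonal Dy := by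
    intro Dx Dy
    rw [Matrix.mul_sub, Matrix.sub_mul]
    congr 1
    · simp only [Matrix.mul_assoc]
      rw [hcU]
    · simp only [Matrix.mul_assoc]
      rw [hV1', Matrix.mul_one, hWdef, Matrix.mul_assoc]
  have hMentry : ∀ i j, (star U * (hPX.sqrt - hPY.sqrt) * V) i j =
      (Real.sqrt (a i ^ 2 + c) - Real.sqrt (b j ^ 2 + c)) * W i j := by
    intro i j
    rw [hsqX, hsqY, hconj]
    simp [Matrix.sub_apply, Matrix.diagonal_mul, Matrix.mul_diagonal]
    ring
  have hNentry : ∀ i j, (star U * (X - Y) * V) i j = (a i - b j) * W i j := by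
    intro i j
    conv_lhs => rw [hspecX, hspecY]
    rw [hconj]
    simp [Matrix.sub_apply, Matrix.diagonal_mul, Matrix.mul_diagonal]
    ring
  -- sum comparison
  have hsum : ∑ i, ∑ j, (star U * (hPX.sqrt - hPY.sqrt) * V) i j ^ 2 ≤
      α ^ 2 * ∑ i, ∑ j, (star U * (X - Y) * V) i j ^ 2 := by
    rw [Finset.mul_sum]
    refine Finset.sum_le_sum fun i _ => ?_
    rw [Finset.mul_sum]
    refine Finset.sum_le_sum fun j _ => ?_
    rw [hMentry i j, hNentry i j]
    have hlip : |Real.sqrt (a i ^ 2 + c) - Real.sqrt (b j ^ 2 + c)| ≤ α * |a i - b j| := by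
      rw [hαdef]
      exact scalar_lip c (a i) (b j) P Q hc (haP i) (hbQ j)
    have h2 : (Real.sqrt (a i ^ 2 + c) - Real.sqrt (b j ^ 2 + c)) ^ 2 ≤
        α ^ 2 * (a i - b j) ^ 2 := by
      nlinarith [mul_self_le_mul_self (abs_nonneg (Real.sqrt (a i ^ 2 + c) -
        Real.sqrt (b j ^ 2 + c))) hlip, sq_abs (Real.sqrt (a i ^ 2 + c) -
        Real.sqrt (b j ^ 2 + c)), sq_abs (a i - b j)]
    calc ((Real.sqrt (a i ^ 2 + c) - Real.sqrt (b j ^ 2 + c)) * W i j) ^ 2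
        = (Real.sqrt (a i ^ 2 + c) - Real.sqrt (b j ^ 2 + c)) ^ 2 * W i j ^ 2 := by ring
      _ ≤ α ^ 2 * (a i - b j) ^ 2 * W i j ^ 2 :=
          mul_le_mul_of_nonneg_right h2 (sq_nonneg _)
      _ = α ^ 2 * ((a i - b j) * W i j) ^ 2 := by ring
  -- transfer through unitary invariance
  have hinv1 : ∑ i, ∑ j, (star U * (hPX.sqrt - hPY.sqrt) * V) i j ^ 2 =
      ∑ i, ∑ j, (hPX.sqrt - hPY.sqrt) i j ^ 2 :=
    sumsq_unitary_conj hX.eigenvectorUnitary.2 hY.eigenvectorUnitary.2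
  have hinv2 : ∑ i, ∑ j, (star U * (X - Y) * V) i j ^ 2 = ∑ i, ∑ j, (X - Y) i j ^ 2 :=
    sumsq_unitary_conj hX.eigenvectorUnitary.2 hY.eigenvectorUnitary.2
  rw [hinv1, hinv2] at hsum
  have : frobNorm (hPX.sqrt - hPY.sqrt) ≤ Real.sqrt (α ^ 2 * ∑ i, ∑ j, (X - Y) i j ^ 2) :=
    Real.sqrt_le_sqrt hsum
  calc frobNorm (hPX.sqrt - hPY.sqrt) ≤ Real.sqrt (α ^ 2 * ∑ i, ∑ j, (X - Y) i j ^ 2) := this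
    _ = α * frobNorm (X - Y) := by
        rw [Real.sqrt_mul (sq_nonneg α), Real.sqrt_sq hα0.le, frobNorm]
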